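/- Let p ≥ 5 be a prime and let q ≥ 2 be an even integer. Then there is no integer j with 0 ≤ j ≤ pq satisfying j² − (pq+1)·j + p − pq − 1 = 0. -/
import Mathlib

/-- For `p ≥ 5` prime and `q ≥ 2` even, the quadratic
`j² - (pq+1)·j + p - pq - 1` has no integer root in `[0, pq]`. -/
theorem no_root_k1_neg_case_a (p q : ℤ) (hp : Prime p) (hp5 : 5 ≤ p)
    (hq : 2 ≤ q) (hqeven : Even q) :
    ¬ ∃ j : ℤ, 0 ≤ j ∧ j ≤ p * q ∧
      j ^ 2 - (p * q + 1) * j + p - p * q - 1 = 0 := by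
  rintro ⟨j, h0, hle, heq⟩
  nlinarith [mul_nonneg h0 (sub_nonneg.mpr hle), mul_nonneg (sub_nonneg.mpr hp5) (sub_nonneg.mpr hq)]
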